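/- Let (X, 𝒰) be a uniform space and f : X → X continuous. Then f is weakly mixing (f × f is transitive on X × X) if and only if the Zadeh extension f̂ : (ℱ(X), 𝒰_∞) → (ℱ(X), 𝒰_∞) is topologically transitive. -/

import Mathlib

open Set Filter Topology UniformSpace
open scoped Uniformity Classical

/-- The α-cut of a fuzzy set: `{x | α ≤ u x}` for `α ≠ 0`, and the support
(closure of `{x | 0 < u x}`) for `α = 0`. -/
noncomputable def fuzzyCut {X : Type*} [TopologicalSpace X] (u : X → ℝ) (α : ℝ) : Set X :=
  if α = 0 then closure {x | 0 < u x} else {x | α ≤ u x}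

/-- `u` belongs to `ℱ(X)`: a normal upper semicontinuous `[0,1]`-valued fuzzy set
with compact support. -/
structure IsFuzzySet {X : Type*} [TopologicalSpace X] (u : X → ℝ) : Prop where
  mem_Icc : ∀ x, u x ∈ Set.Icc (0:ℝ) 1
  usc : UpperSemicontinuous u
  normal : ∃ x, u x = 1
  compact_supp : IsCompact (closure {x | 0 < u x})

/-- The Zadeh extension of `f`: `x ↦ sup {u z : f z = x}` (and `0` when the
preimage is empty, since `sSup ∅ = 0` in `ℝ`). -/
noncomputable def zadeh {X : Type*} (f : X → X) (u : X → ℝ) : X → ℝ :=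
  fun x => sSup (u '' (f ⁻¹' {x}))

/-- `W(A) = ⋃ a ∈ A, W(a)` where `W(a) = {y | (a, y) ∈ W}`. -/
def ballImage {Y : Type*} (W : Set (Y × Y)) (A : Set Y) : Set Y :=
  {y | ∃ a ∈ A, (a, y) ∈ W}

/-- The Hausdorff entourage relation `𝒦[W]`: `(A,B) ∈ 𝒦[W]` iff `A ⊆ W(B)` and `B ⊆ W(A)`. -/
def KRel {Y : Type*} (W : Set (Y × Y)) (A B : Set Y) : Prop :=
  A ⊆ ballImage W B ∧ B ⊆ ballImage W A

/-- The level-wise entourage relation `ℱ[W]`: `(u_α, v_α) ∈ 𝒦[W]` for all `α ∈ [0,1]`. -/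
def FRel {X : Type*} [TopologicalSpace X] (W : Set (X × X)) (u v : X → ℝ) : Prop :=
  ∀ α ∈ Set.Icc (0:ℝ) 1, KRel W (fuzzyCut u α) (fuzzyCut v α)

/-- The Skorokhod entourage relation `G[W, ε]`: there is an increasing homeomorphism `t`
of `[0,1]` with `‖t‖ < ε` and `(u_α, v_{t α}) ∈ 𝒦[W]` for all `α ∈ [0,1]`. -/
def SkoRel {X : Type*} [TopologicalSpace X] (W : Set (X × X)) (ε : ℝ) (u v : X → ℝ) : Prop :=
  ∃ t : ℝ → ℝ, StrictMonoOn t (Set.Icc 0 1) ∧ t 0 = 0 ∧ t 1 = 1 ∧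
    Set.MapsTo t (Set.Icc 0 1) (Set.Icc 0 1) ∧ Set.SurjOn t (Set.Icc 0 1) (Set.Icc 0 1) ∧
    (∀ α ∈ Set.Icc (0:ℝ) 1, |t α - α| < ε) ∧
    (∀ α ∈ Set.Icc (0:ℝ) 1, KRel W (fuzzyCut u α) (fuzzyCut v (t α)))

/-- The sendograph of `u`: `end(u) ∩ (u₀ × [0,1])`. -/
noncomputable def send {X : Type*} [TopologicalSpace X] (u : X → ℝ) : Set (X × ℝ) :=
  {p | p.1 ∈ fuzzyCut u 0 ∧ p.2 ∈ Set.Icc (0:ℝ) 1 ∧ p.2 ≤ u p.1}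

/-- The product entourage `U × V_ε` on `X × [0,1]`. -/
def prodEnt {X : Type*} (U : Set (X × X)) (ε : ℝ) : Set ((X × ℝ) × (X × ℝ)) :=
  {p | (p.1.1, p.2.1) ∈ U ∧ |p.1.2 - p.2.2| < ε}

/-- The sendograph entourage relation `S[U, ε]`. -/
noncomputable def SendRel {X : Type*} [TopologicalSpace X] (U : Set (X × X)) (ε : ℝ)
    (u v : X → ℝ) : Prop :=
  KRel (prodEnt U ε) (send u) (send v)

/-- `u_{α⁺} = closure (⋃ β ∈ (α, 1], u_β)`, the right limit of the level map. -/
noncomputable def cutPlus {X : Type*} [TopologicalSpace X] (u : X → ℝ) (α : ℝ) : Set X :=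
  closure (⋃ β ∈ Set.Ioc α 1, fuzzyCut u β)

/-- `B` belongs to the Vietoris basic open set `⟨V 0, …, V (k-1)⟩`. -/
def inVietoris {Y : Type*} (B : Set Y) (k : ℕ) (V : Fin k → Set Y) : Prop :=
  B ⊆ (⋃ i, V i) ∧ ∀ i, (B ∩ V i).Nonempty


theorem SetRel.IsSymm.mk_mem_comm {α : Type*} {R : SetRel α α} (h : R.IsSymm) {a b : α} :
    (a, b) ∈ R ↔ (b, a) ∈ R := by
  haveI := h
  exact _root_.SetRel.comm R

section helpers


variable {X : Type*} [UniformSpace X]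

lemma comp4_exists {U : Set (X × X)} (hU : U ∈ 𝓤 X) :
    ∃ W ∈ 𝓤 X, IsOpen W ∧ SetRel.IsSymm W ∧
      (∀ a b, (a,b) ∈ W → (a,b) ∈ U) ∧
      (∀ a b c, (a,b) ∈ W → (b,c) ∈ W → (a,c) ∈ U) ∧
      (∀ a b c d, (a,b) ∈ W → (b,c) ∈ W → (c,d) ∈ W → (a,d) ∈ U) ∧
      (∀ a b c d e, (a,b) ∈ W → (b,c) ∈ W → (c,d) ∈ W → (d,e) ∈ W → (a,e) ∈ U) := by
  obtain ⟨t₁, ht₁, hs₁, hc₁⟩ := comp_symm_mem_uniformity_sets hU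
  obtain ⟨t₂, ht₂, hs₂, hc₂⟩ := comp_symm_mem_uniformity_sets ht₁
  obtain ⟨W, ⟨hW, hWo, hWs⟩, hWsub⟩ := uniformity_hasBasis_open_symmetric.mem_iff.mp ht₂
  refine ⟨W, hW, hWo, hWs, ?_, ?_, ?_, ?_⟩
  · intro a b h
    exact hc₁ ⟨b, hc₂ ⟨b, hWsub h, refl_mem_uniformity ht₂⟩, refl_mem_uniformity ht₁⟩
  · intro a b c h1 h2
    exact hc₁ ⟨c, hc₂ ⟨b, hWsub h1, hWsub h2⟩, refl_mem_uniformity ht₁⟩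
  · intro a b c d h1 h2 h3
    exact hc₁ ⟨c, hc₂ ⟨b, hWsub h1, hWsub h2⟩, hc₂ ⟨d, hWsub h3, refl_mem_uniformity ht₂⟩⟩
  · intro a b c d e h1 h2 h3 h4
    exact hc₁ ⟨c, hc₂ ⟨b, hWsub h1, hWsub h2⟩, hc₂ ⟨d, hWsub h3, hWsub h4⟩⟩

lemma exists_mem_of_mem_closure {W : Set (X × X)} (hW : W ∈ 𝓤 X) (hs : SetRel.IsSymm W)
    {S : Set X} {x : X} (h : x ∈ closure S) : ∃ s ∈ S, (s, x) ∈ W := by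
  obtain ⟨s, hs1, hs2⟩ := mem_closure_iff_nhds.mp h _ (UniformSpace.ball_mem_nhds x hW)
  exact ⟨s, hs2, hs.mk_mem_comm.mp hs1⟩

lemma isOpen_ballImage {W : Set (X × X)} (hW : IsOpen W) (A : Set X) :
    IsOpen (ballImage W A) := by
  have : ballImage W A = ⋃ a ∈ A, UniformSpace.ball a W := by
    ext y; simp [ballImage, UniformSpace.ball]
  rw [this]
  exact isOpen_biUnion fun a _ => UniformSpace.isOpen_ball a hW


/-- finite "simple" fuzzy set from a list of (point, level) pairs -/
noncomputable def lf {X : Type*} [TopologicalSpace X] (M : List (X × ℝ)) : X → ℝ :=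
  fun x => (M.map (fun e => if x ∈ closure {e.1} then e.2 else 0)).foldr max 0

lemma foldr_max_cases : ∀ (l : List ℝ), l.foldr max 0 = 0 ∨ l.foldr max 0 ∈ l := by
  intro l
  induction l with
  | nil => left; rfl
  | cons a t ih =>
    rcases max_cases a (t.foldr max 0) with ⟨h, _⟩ | ⟨h, _⟩
    · right; rw [List.foldr_cons, h]; exact List.mem_cons_self
    · rcases ih with h' | h'
      · left; rw [List.foldr_cons, h, h']
      · right; rw [List.foldr_cons, h]; exact List.mem_cons_of_mem _ h'

lemma le_foldr_max {l : List ℝ} {a : ℝ} (h : a ∈ l) : a ≤ l.foldr max 0 := by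
  induction l with
  | nil => simp at h
  | cons b t ih =>
    rcases List.mem_cons.mp h with rfl | h'
    · exact le_max_left _ _
    · exact le_trans (ih h') (le_max_right _ _)

lemma foldr_max_nonneg (l : List ℝ) : 0 ≤ l.foldr max 0 := by
  induction l with
  | nil => simp
  | cons b t ih => exact le_trans ih (le_max_right _ _)

section
variable {X : Type*} [TopologicalSpace X] {M : List (X × ℝ)}

lemma lf_nonneg (x : X) : 0 ≤ lf M x := foldr_max_nonneg _

lemma lf_ge {e : X × ℝ} (he : e ∈ M) (x : X) (hx : x ∈ closure {e.1}) : e.2 ≤ lf M x := by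
  have : e.2 ∈ M.map (fun e => if x ∈ closure {e.1} then e.2 else 0) := by
    refine List.mem_map.mpr ⟨e, he, by simp [hx]⟩
  exact le_foldr_max this

lemma lf_le_one (hM : ∀ e ∈ M, e.2 ≤ (1:ℝ)) (x : X) : lf M x ≤ 1 := by
  rcases foldr_max_cases (M.map (fun e => if x ∈ closure {e.1} then e.2 else 0)) with h | h
  · rw [lf, h]; norm_num
  · obtain ⟨e, he, hev⟩ := List.mem_map.mp h
    rw [lf, ← hev]
    split
    · exact hM e he
    · norm_num

lemma lf_exists {x : X} (h : 0 < lf M x) : ∃ e ∈ M, x ∈ closure {e.1} ∧ lf M x ≤ e.2 := by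
  rcases foldr_max_cases (M.map (fun e => if x ∈ closure {e.1} then e.2 else 0)) with h' | h'
  · rw [lf] at h; rw [h'] at h; exact absurd h (lt_irrefl 0)
  · obtain ⟨e, he, hev⟩ := List.mem_map.mp h'
    by_cases hx : x ∈ closure {e.1}
    · rw [if_pos hx] at hev
      exact ⟨e, he, hx, by rw [lf, ← hev]⟩
    · rw [if_neg hx] at hev
      rw [lf, ← hev] at h; exact absurd h (lt_irrefl 0)

/-- cut description of `lf` at positive levels -/
lemma lf_cut {γ : ℝ} (hγ : 0 < γ) :
    {x | γ ≤ lf M x} = ⋃ e ∈ {e | e ∈ M ∧ γ ≤ e.2}, closure {e.1} := by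
  ext x
  simp only [mem_setOf_eq, mem_iUnion, exists_prop]
  constructor
  · intro h
    obtain ⟨e, he, hx, hle⟩ := lf_exists (lt_of_lt_of_le hγ h)
    exact ⟨e, ⟨he, le_trans h hle⟩, hx⟩
  · rintro ⟨e, ⟨he, hγe⟩, hx⟩
    exact le_trans hγe (lf_ge he x hx)

lemma lf_isClosed_cut (γ : ℝ) (hγ : 0 < γ) : IsClosed {x | γ ≤ lf M x} := by
  rw [lf_cut hγ]
  refine Set.Finite.isClosed_biUnion ?_ fun e _ => isClosed_closure
  exact (M.finite_toSet).subset fun e he => he.1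

lemma lf_usc : UpperSemicontinuous (lf (X := X) M) := by
  rw [upperSemicontinuous_iff_isOpen_preimage]
  intro a
  rcases le_or_gt a 0 with ha | ha
  · have : lf M ⁻¹' Iio a = ∅ := by
      ext x; simp only [mem_preimage, mem_Iio, mem_empty_iff_false, iff_false, not_lt]
      exact le_trans ha (lf_nonneg x)
    rw [this]; exact isOpen_empty
  · have : lf M ⁻¹' Iio a = {x | a ≤ lf M x}ᶜ := by
      ext x; simp [not_le]
    rw [this]
    exact (lf_isClosed_cut a ha).isOpen_compl
end


variable {X : Type*} {f : X → X}

lemma zadeh_nonneg {g : X → ℝ} (h0 : ∀ x, 0 ≤ g x) (y : X) : 0 ≤ zadeh f g y :=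
  Real.sSup_nonneg (by rintro x ⟨z, _, rfl⟩; exact h0 z)

lemma zadeh_le_one {g : X → ℝ} (h1 : ∀ x, g x ≤ 1) (y : X) : zadeh f g y ≤ 1 :=
  Real.sSup_le (by rintro x ⟨z, _, rfl⟩; exact h1 z) zero_le_one

lemma zadeh_ge {g : X → ℝ} (h1 : ∀ x, g x ≤ 1) (x : X) : g x ≤ zadeh f g (f x) := by
  refine le_csSup ⟨1, ?_⟩ ⟨x, rfl, rfl⟩
  rintro t ⟨z, _, rfl⟩; exact h1 z

lemma zadeh_exists_gt {g : X → ℝ} {y : X} {α β : ℝ} (hβ : 0 ≤ β) (hβα : β < α)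
    (h : α ≤ zadeh f g y) : ∃ x, f x = y ∧ β < g x := by
  by_contra hcon
  push_neg at hcon
  have : zadeh f g y ≤ β := Real.sSup_le (by rintro t ⟨z, hz, rfl⟩; exact hcon z hz) hβ
  linarith

lemma zadeh_iter_nonneg {g : X → ℝ} (h0 : ∀ x, 0 ≤ g x) (h1 : ∀ x, g x ≤ 1) (n : ℕ) :
    (∀ y, 0 ≤ (zadeh f)^[n] g y) ∧ (∀ y, (zadeh f)^[n] g y ≤ 1) := by
  induction n with
  | zero => exact ⟨h0, h1⟩
  | succ n ih =>
    rw [Function.iterate_succ_apply']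
    exact ⟨zadeh_nonneg ih.1, zadeh_le_one ih.2⟩

lemma zadeh_iter_ge {g : X → ℝ} (h0 : ∀ x, 0 ≤ g x) (h1 : ∀ x, g x ≤ 1) (n : ℕ) (x : X) :
    g x ≤ (zadeh f)^[n] g (f^[n] x) := by
  induction n with
  | zero => exact le_refl _
  | succ n ih =>
    rw [Function.iterate_succ_apply', Function.iterate_succ_apply']
    calc g x ≤ (zadeh f)^[n] g (f^[n] x) := ih
    _ ≤ zadeh f ((zadeh f)^[n] g) (f (f^[n] x)) :=
        zadeh_ge (zadeh_iter_nonneg h0 h1 n).2 _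

lemma zadeh_iter_exists_gt {g : X → ℝ} (h0 : ∀ x, 0 ≤ g x) (h1 : ∀ x, g x ≤ 1) {n : ℕ}
    {y : X} {α β : ℝ} (hβ : 0 ≤ β) (hβα : β < α) (h : α ≤ (zadeh f)^[n] g y) :
    ∃ x, f^[n] x = y ∧ β < g x := by
  induction n generalizing y α with
  | zero => exact ⟨y, rfl, lt_of_lt_of_le hβα h⟩
  | succ n ih =>
    rw [Function.iterate_succ_apply'] at h
    have hmid1 : β < (α + β)/2 := by linarith
    have hmid2 : (α + β)/2 < α := by linarith
    obtain ⟨x₁, hx₁, hgt⟩ := zadeh_exists_gt (le_trans hβ hmid1.le) hmid2 h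
    obtain ⟨x, hx, hgx⟩ := ih (lt_trans hmid1 hgt) (le_refl _)
    exact ⟨x, by rw [Function.iterate_succ_apply', hx, hx₁], hgx⟩


lemma ballImage_mono {Y : Type*} {W : Set (Y × Y)} {A B : Set Y} (h : A ⊆ B) :
    ballImage W A ⊆ ballImage W B := fun y ⟨a, ha, haw⟩ => ⟨a, h ha, haw⟩

lemma foldr_min_pos {l : List ℝ} (h : ∀ a ∈ l, 0 < a) : 0 < l.foldr min 1 := by
  induction l with
  | nil => norm_num
  | cons b t ih =>
    exact lt_min (h b (List.mem_cons_self)) (ih fun a ha => h a (List.mem_cons_of_mem _ ha))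

lemma foldr_min_le {l : List ℝ} {a : ℝ} (h : a ∈ l) : l.foldr min 1 ≤ a := by
  induction l with
  | nil => simp at h
  | cons b t ih =>
    rcases List.mem_cons.mp h with rfl | h'
    · exact min_le_left _ _
    · exact le_trans (min_le_right _ _) (ih h')

variable {X : Type*} [UniformSpace X]

lemma usc_cut_closed {u : X → ℝ} (husc : UpperSemicontinuous u) (a : ℝ) :
    IsClosed {x | a ≤ u x} := by
  have : {x | a ≤ u x} = (u ⁻¹' Iio a)ᶜ := by ext x; simp [not_lt]
  rw [this]
  exact isClosed_compl_iff.mpr (upperSemicontinuous_iff_isOpen_preimage.mp husc a)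

section net
variable {u : X → ℝ} (h0 : ∀ x, 0 ≤ u x) (h1 : ∀ x, u x ≤ 1)
  (husc : UpperSemicontinuous u) (hcomp : IsCompact (closure {x | 0 < u x}))

include h0 h1 husc hcomp

/-- right part: covers levels just above `t`. -/
lemma net_right {W : Set (X × X)} (hW : W ∈ 𝓤 X) (hWo : IsOpen W) (hWs : SetRel.IsSymm W)
    {t : ℝ} (ht : 0 ≤ t) :
    ∃ δ > (0:ℝ), ∃ F : List (X × ℝ),
      (∀ e ∈ F, 0 < e.2 ∧ e.2 ≤ 1 ∧ e.2 ≤ u e.1) ∧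
      (∀ γ : ℝ, t < γ → γ < t + δ →
        {x | γ ≤ u x} ⊆ ballImage (SetRel.comp W W) {p | ∃ ℓ, (p, ℓ) ∈ F ∧ γ ≤ ℓ}) := by
  set D := {x | t < u x} with hD
  have hDsub : D ⊆ {x | 0 < u x} := fun x hx => lt_of_le_of_lt ht hx
  have hC : IsCompact (closure D) :=
    IsCompact.of_isClosed_subset hcomp isClosed_closure (closure_mono hDsub)
  have hcover : closure D ⊆ ⋃ i : D, ball i.1 W := by
    intro y hy
    obtain ⟨d, hd1, hd2⟩ := mem_closure_iff_nhds.mp hy _ (UniformSpace.ball_mem_nhds y hW)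
    exact mem_iUnion.mpr ⟨⟨d, hd2⟩, hWs.mk_mem_comm.mp hd1⟩
  obtain ⟨s, hscover⟩ := hC.elim_finite_subcover (fun i : D => ball i.1 W)
    (fun i => UniformSpace.isOpen_ball _ hWo) hcover
  refine ⟨(s.toList.map (fun i => u i.1 - t)).foldr min 1, ?_, 
    s.toList.map (fun i => (i.1, u i.1)), ?_, ?_⟩
  · apply foldr_min_pos
    intro a ha
    obtain ⟨i, _, rfl⟩ := List.mem_map.mp ha
    have : t < u i.1 := i.2
    linarith
  · intro e he
    obtain ⟨i, _, rfl⟩ := List.mem_map.mp he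
    have : t < u i.1 := i.2
    exact ⟨lt_of_le_of_lt ht this, h1 _, le_refl _⟩
  · intro γ hγt hγδ x hx
    have hxD : x ∈ D := lt_of_lt_of_le hγt hx
    have := hscover (subset_closure hxD)
    obtain ⟨i, hi, hxi⟩ := mem_iUnion₂.mp this
    refine ⟨i.1, ⟨u i.1, List.mem_map.mpr ⟨i, Finset.mem_toList.mpr hi, rfl⟩, ?_⟩, 
      ⟨i.1, refl_mem_uniformity hW, hxi⟩⟩
    · have hle : (s.toList.map (fun i => u i.1 - t)).foldr min 1 ≤ u i.1 - t :=
        foldr_min_le (List.mem_map.mpr ⟨i, Finset.mem_toList.mpr hi, rfl⟩)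
      linarith
end net

section net2
variable {u : X → ℝ} (h0 : ∀ x, 0 ≤ u x) (h1 : ∀ x, u x ≤ 1)
  (husc : UpperSemicontinuous u) (hcomp : IsCompact (closure {x | 0 < u x}))
include h0 h1 husc hcomp

/-- left part: covers levels in `(β, t]` for some `β < t`. -/
lemma net_left {W : Set (X × X)} (hW : W ∈ 𝓤 X) (hWo : IsOpen W) (hWs : SetRel.IsSymm W)
    {t : ℝ} (ht0 : 0 < t) (ht1 : t ≤ 1) :
    ∃ β : ℝ, 0 ≤ β ∧ β < t ∧ ∃ F : List (X × ℝ),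
      (∀ e ∈ F, 0 < e.2 ∧ e.2 ≤ 1 ∧ e.2 ≤ u e.1) ∧
      (∀ γ : ℝ, β < γ → γ ≤ t →
        {x | γ ≤ u x} ⊆ ballImage (SetRel.comp W W) {p | ∃ ℓ, (p, ℓ) ∈ F ∧ γ ≤ ℓ}) := by
  have hdivlt : ∀ c : ℝ, 0 ≤ c → t/(c+2) < t := by
    intro c hc
    apply div_lt_self ht0
    linarith
  have hdivpos : ∀ c : ℝ, 0 ≤ c → 0 < t/(c+2) := by
    intro c hc; positivity
  set K := {x | t ≤ u x} with hK
  have hKcl : IsClosed K := usc_cut_closed husc t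
  have hKsub : K ⊆ closure {x | 0 < u x} :=
    fun x hx => subset_closure (lt_of_lt_of_le ht0 hx)
  have hKcomp : IsCompact K := IsCompact.of_isClosed_subset hcomp hKcl hKsub
  set G := ballImage W K with hG
  have hGopen : IsOpen G := by
    have : G = ⋃ a ∈ K, ball a W := by
      ext y; simp [hG, ballImage, UniformSpace.ball]
    rw [this]; exact isOpen_biUnion fun a _ => UniformSpace.isOpen_ball a hWo
  have hKG : K ⊆ G := fun x hx => ⟨x, hx, refl_mem_uniformity hW⟩
  set S : ℕ → Set X := fun n => {x | t - t/((n:ℝ)+2) ≤ u x} ∩ Gᶜ with hS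
  have hβ : ∃ n : ℕ, S n = ∅ := by
    by_contra hcon
    push_neg at hcon
    have hne : ∀ n : ℕ, (S n).Nonempty := by
      intro n
      exact hcon n
    have hdec : ∀ n : ℕ, S (n+1) ⊆ S n := by
      intro n
      apply inter_subset_inter_left
      intro x hx
      simp only [mem_setOf_eq] at hx ⊢
      push_cast at hx
      have hd : t/((n:ℝ)+1+2) ≤ t/((n:ℝ)+2) :=
        div_le_div_of_nonneg_left ht0.le (by positivity) (by linarith)
      linarith
    have hclosed : ∀ n : ℕ, IsClosed (S n) := fun n =>
      (usc_cut_closed husc _).inter (isClosed_compl_iff.mpr hGopen)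
    have hcomp0 : IsCompact (S 0) := by
      apply IsCompact.of_isClosed_subset hcomp (hclosed 0)
      intro x hx
      have hx1 : t - t/(((0:ℕ):ℝ)+2) ≤ u x := hx.1
      have hlt : t/(((0:ℕ):ℝ)+2) < t := hdivlt _ (Nat.cast_nonneg 0)
      exact subset_closure (by simp only [mem_setOf_eq]; linarith)
    obtain ⟨x, hx⟩ := IsCompact.nonempty_iInter_of_sequence_nonempty_isCompact_isClosed
      S hdec hne hcomp0 hclosed
    have hxn := mem_iInter.mp hx
    have hxK : x ∈ K := by
      by_contra hxK
      have hlt : u x < t := lt_of_not_ge hxK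
      have h0' : 0 < t - u x := by linarith
      obtain ⟨n, hn⟩ := exists_nat_gt (t / (t - u x))
      have hn2 : t / (t - u x) < (n:ℝ) + 2 := by
        have : (0:ℝ) ≤ (n:ℝ) := Nat.cast_nonneg n
        linarith
      have hlt2 : t / ((n:ℝ)+2) < t - u x := by
        have hpos : (0:ℝ) < (n:ℝ) + 2 := by positivity
        rw [div_lt_iff₀ hpos]
        calc t = (t/(t - u x)) * (t - u x) := by field_simp
        _ < ((n:ℝ)+2) * (t - u x) := mul_lt_mul_of_pos_right hn2 h0'
        _ = (t - u x) * ((n:ℝ)+2) := by ring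
      have := (hxn n).1
      simp only [mem_setOf_eq] at this
      linarith
    exact (hxn 0).2 (hKG hxK)
  obtain ⟨n, hn⟩ := hβ
  have hsubG : {x | t - t/((n:ℝ)+2) ≤ u x} ⊆ G := by
    intro x hx
    by_contra hxG
    have hxS : x ∈ S n := ⟨hx, hxG⟩
    rw [hn] at hxS
    exact absurd hxS (notMem_empty x)
  obtain ⟨s, hsK, hscover⟩ := hKcomp.elim_nhds_subcover (fun x => ball x W)
    (fun x _ => UniformSpace.ball_mem_nhds x hW)
  refine ⟨t - t/((n:ℝ)+2), ?_, ?_, s.toList.map (fun p => (p, t)), ?_, ?_⟩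
  · have := hdivlt (n:ℝ) (Nat.cast_nonneg n)
    linarith
  · have := hdivpos (n:ℝ) (Nat.cast_nonneg n)
    linarith
  · intro e he
    obtain ⟨p, hp, rfl⟩ := List.mem_map.mp he
    exact ⟨ht0, ht1, hsK p (Finset.mem_toList.mp hp)⟩
  · intro γ hγβ hγt x hx
    have hxG : x ∈ G := hsubG (by
      simp only [mem_setOf_eq] at hx ⊢
      linarith)
    obtain ⟨a, haK, haw⟩ := hxG
    obtain ⟨p, hp, hap⟩ := mem_iUnion₂.mp (hscover haK)
    exact ⟨p, ⟨t, List.mem_map.mpr ⟨p, Finset.mem_toList.mpr hp, rfl⟩, hγt⟩, ⟨a, hap, haw⟩⟩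
end net2

section net3
variable {u : X → ℝ} (h0 : ∀ x, 0 ≤ u x) (h1 : ∀ x, u x ≤ 1)
  (husc : UpperSemicontinuous u) (hcomp : IsCompact (closure {x | 0 < u x}))
  (hnorm : ∃ x, u x = 1)
include h0 h1 husc hcomp hnorm

/-- The master net lemma: a finite simple approximation of `u` at every positive level. -/
lemma net_lemma {W : Set (X × X)} (hW : W ∈ 𝓤 X) (hWo : IsOpen W) (hWs : SetRel.IsSymm W) :
    ∃ L : List (X × ℝ),
      (∀ e ∈ L, 0 < e.2 ∧ e.2 ≤ 1 ∧ e.2 ≤ u e.1) ∧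
      (∃ e ∈ L, e.2 = 1) ∧
      (∀ γ : ℝ, 0 < γ → γ ≤ 1 →
        {x | γ ≤ u x} ⊆ ballImage (SetRel.comp W W) {p | ∃ ℓ, (p, ℓ) ∈ L ∧ γ ≤ ℓ}) := by
  have key : ∀ t ∈ Icc (0:ℝ) 1, ∃ O : Set ℝ, O ∈ 𝓝 t ∧ ∃ F : List (X × ℝ),
      (∀ e ∈ F, 0 < e.2 ∧ e.2 ≤ 1 ∧ e.2 ≤ u e.1) ∧
      (∀ γ : ℝ, γ ∈ O → 0 < γ → γ ≤ 1 →
        {x | γ ≤ u x} ⊆ ballImage (SetRel.comp W W) {p | ∃ ℓ, (p, ℓ) ∈ F ∧ γ ≤ ℓ}) := by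
    rintro t ⟨ht0, ht1⟩
    rcases eq_or_lt_of_le ht0 with rfl | htpos
    · obtain ⟨δ, hδ, F, hF, hFcov⟩ := net_right h0 h1 husc hcomp hW hWo hWs (le_refl 0)
      refine ⟨Iio δ, Iio_mem_nhds hδ, F, hF, ?_⟩
      intro γ hγO hγ0 _
      exact hFcov γ hγ0 (by simpa using hγO)
    · obtain ⟨δ, hδ, FR, hFR, hFRcov⟩ := net_right h0 h1 husc hcomp hW hWo hWs ht0
      obtain ⟨β, hβ0, hβt, FL, hFL, hFLcov⟩ := net_left h0 h1 husc hcomp hW hWo hWs htpos ht1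
      refine ⟨Ioo β (t + δ), Ioo_mem_nhds hβt (by linarith), FL ++ FR, ?_, ?_⟩
      · intro e he
        rcases List.mem_append.mp he with h | h
        · exact hFL e h
        · exact hFR e h
      · intro γ hγO hγ0 hγ1
        rcases le_or_gt γ t with hle | hlt
        · refine subset_trans (hFLcov γ hγO.1 hle) (ballImage_mono ?_)
          rintro p ⟨ℓ, hpℓ, hγℓ⟩
          exact ⟨ℓ, List.mem_append.mpr (Or.inl hpℓ), hγℓ⟩
        · refine subset_trans (hFRcov γ hlt hγO.2) (ballImage_mono ?_)
          rintro p ⟨ℓ, hpℓ, hγℓ⟩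
          exact ⟨ℓ, List.mem_append.mpr (Or.inr hpℓ), hγℓ⟩
  -- compactness glue
  choose O hO F hF hFcov using key
  obtain ⟨ts, hts⟩ := (isCompact_Icc (a := (0:ℝ)) (b := 1)).elim_nhds_subcover'
    (fun t ht => O t ht) (fun t ht => hO t ht)
  obtain ⟨x₁, hx₁⟩ := hnorm
  refine ⟨(x₁, 1) :: (ts.toList.map (fun t => F t.1 t.2)).flatten, ?_, ?_, ?_⟩
  · intro e he
    rcases List.mem_cons.mp he with rfl | he'
    · exact ⟨one_pos, le_refl 1, le_of_eq hx₁.symm⟩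
    · obtain ⟨l, hl, hel⟩ := List.mem_flatten.mp he'
      obtain ⟨t, _, rfl⟩ := List.mem_map.mp hl
      exact hF t.1 t.2 e hel
  · exact ⟨(x₁, 1), List.mem_cons_self, rfl⟩
  · intro γ hγ0 hγ1
    have hγIcc : γ ∈ Icc (0:ℝ) 1 := ⟨hγ0.le, hγ1⟩
    obtain ⟨t, ht, hγO⟩ := mem_iUnion₂.mp (hts hγIcc)
    refine subset_trans (hFcov t.1 t.2 γ hγO hγ0 hγ1) (ballImage_mono ?_)
    rintro p ⟨ℓ, hpℓ, hγℓ⟩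
    refine ⟨ℓ, List.mem_cons_of_mem _ (List.mem_flatten.mpr ⟨F t.1 t.2, ?_, hpℓ⟩), hγℓ⟩
    exact List.mem_map.mpr ⟨t, Finset.mem_toList.mpr ht, rfl⟩
end net3


variable {X : Type*} [UniformSpace X] {f : X → X}

omit [UniformSpace X] in
lemma prodMap_iterate (f : X → X) (n : ℕ) (p : X × X) :
    (Prod.map f f)^[n] p = (f^[n] p.1, f^[n] p.2) := by
  induction n generalizing p with
  | zero => rfl
  | succ n ih => rw [Function.iterate_succ_apply, Function.iterate_succ_apply,
      Function.iterate_succ_apply, ih]; rfl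

/-- multi-target transitivity from weak mixing, list version -/
lemma multi_trans (hf : Continuous f)
    (H : ∀ A B C D : Set X, IsOpen A → A.Nonempty → IsOpen B → B.Nonempty →
      IsOpen C → C.Nonempty → IsOpen D → D.Nonempty →
      ∃ k, 0 < k ∧ (f^[k] '' A ∩ C).Nonempty ∧ (f^[k] '' B ∩ D).Nonempty) :
    ∀ l : List (Set X × Set X),
      (∀ pr ∈ l, IsOpen pr.1 ∧ pr.1.Nonempty ∧ IsOpen pr.2 ∧ pr.2.Nonempty) →
      ∃ n, 0 < n ∧ ∀ pr ∈ l, (f^[n] '' pr.1 ∩ pr.2).Nonempty := by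
  have main : ∀ (m : ℕ) (l : List (Set X × Set X)), l.length ≤ m →
      (∀ pr ∈ l, IsOpen pr.1 ∧ pr.1.Nonempty ∧ IsOpen pr.2 ∧ pr.2.Nonempty) →
      ∃ n, 0 < n ∧ ∀ pr ∈ l, (f^[n] '' pr.1 ∩ pr.2).Nonempty := by
    intro m
    induction m with
    | zero =>
      intro l hlen _
      have : l = [] := List.eq_nil_of_length_eq_zero (Nat.le_zero.mp hlen)
      subst this
      exact ⟨1, one_pos, fun pr hpr => absurd hpr List.not_mem_nil⟩
    | succ m ih =>
      intro l hlen hl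
      match l with
      | [] => exact ⟨1, one_pos, fun pr hpr => absurd hpr List.not_mem_nil⟩
      | [pr] =>
        obtain ⟨hA, hAne, hB, hBne⟩ := hl pr (List.mem_cons_self)
        obtain ⟨k, hk, h1, _⟩ := H pr.1 pr.1 pr.2 pr.2 hA hAne hA hAne hB hBne hB hBne
        refine ⟨k, hk, fun pr' hpr' => ?_⟩
        rcases List.mem_singleton.mp hpr' with rfl
        exact h1
      | pr₁ :: pr₂ :: rest =>
        obtain ⟨hA, hAne, hB, hBne⟩ := hl pr₁ (List.mem_cons_self)
        obtain ⟨hC, hCne, hD, hDne⟩ := hl pr₂ (List.mem_cons_of_mem _ (List.mem_cons_self))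
        obtain ⟨k, hkpos, ⟨c, ⟨a, ha, hac⟩, hc⟩, ⟨d, ⟨b, hb, hbd⟩, hd⟩⟩ :=
          H pr₁.1 pr₁.2 pr₂.1 pr₂.2 hA hAne hB hBne hC hCne hD hDne
        set E := pr₁.1 ∩ f^[k] ⁻¹' pr₂.1 with hE
        set F := pr₁.2 ∩ f^[k] ⁻¹' pr₂.2 with hF
        have hEo : IsOpen E := hA.inter (hC.preimage (hf.iterate k))
        have hEne : E.Nonempty := ⟨a, ha, by simp only [mem_preimage, hac]; exact hc⟩
        have hFo : IsOpen F := hB.inter (hD.preimage (hf.iterate k))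
        have hFne : F.Nonempty := ⟨b, hb, by simp only [mem_preimage, hbd]; exact hd⟩
        have hlen' : ((E, F) :: rest).length ≤ m := by
          simp only [List.length_cons] at hlen ⊢
          omega
        obtain ⟨n, hn, hall⟩ := ih ((E, F) :: rest) hlen' (by
          intro pr hpr
          rcases List.mem_cons.mp hpr with rfl | hpr'
          · exact ⟨hEo, hEne, hFo, hFne⟩
          · exact hl pr (List.mem_cons_of_mem _ (List.mem_cons_of_mem _ hpr')))
        refine ⟨n, hn, ?_⟩
        intro pr hpr
        obtain ⟨y, ⟨x, hxE, hxy⟩, hyF⟩ := hall (E, F) (List.mem_cons_self)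
        rcases List.mem_cons.mp hpr with rfl | hpr'
        · exact ⟨y, ⟨x, hxE.1, hxy⟩, hyF.1⟩
        rcases List.mem_cons.mp hpr' with rfl | hpr''
        · have hcomm : f^[n] (f^[k] x) = f^[k] y := by
            rw [← Function.iterate_add_apply, add_comm, Function.iterate_add_apply, hxy]
          exact ⟨f^[k] y, ⟨f^[k] x, hxE.2, hcomm⟩, hyF.2⟩
        · exact hall pr (List.mem_cons_of_mem _ hpr'')
  exact fun l hl => main l.length l (le_refl _) hl

end helpers

section more
variable {X : Type*} [UniformSpace X]

lemma fuzzyCut_pos (u : X → ℝ) {α : ℝ} (hα : α ≠ 0) : fuzzyCut u α = {x | α ≤ u x} :=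
  if_neg hα

lemma fuzzyCut_zero (u : X → ℝ) : fuzzyCut u 0 = closure {x | 0 < u x} := if_pos rfl

lemma lf_supp {M : List (X × ℝ)} (hlev : ∀ e ∈ M, 0 < e.2) :
    {x | 0 < lf M x} = ⋃ e ∈ {e | e ∈ M}, closure {e.1} := by
  ext x
  simp only [mem_setOf_eq, mem_iUnion, exists_prop]
  constructor
  · intro h
    obtain ⟨e, he, hx, _⟩ := lf_exists h
    exact ⟨e, he, hx⟩
  · rintro ⟨e, he, hx⟩
    exact lt_of_lt_of_le (hlev e he) (lf_ge he x hx)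

lemma lf_supp_closed {M : List (X × ℝ)} (hlev : ∀ e ∈ M, 0 < e.2) :
    closure {x | 0 < lf M x} = ⋃ e ∈ {e | e ∈ M}, closure {e.1} := by
  rw [lf_supp hlev]
  exact IsClosed.closure_eq <| Set.Finite.isClosed_biUnion M.finite_toSet
    fun e _ => isClosed_closure

lemma lf_isFuzzySet (M : List (X × ℝ)) (hlev : ∀ e ∈ M, 0 < e.2 ∧ e.2 ≤ 1)
    (hne : ∃ e ∈ M, e.2 = 1) : IsFuzzySet (lf M) := by
  obtain ⟨e₁, he₁, he₁2⟩ := hne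
  refine ⟨fun x => ⟨lf_nonneg x, lf_le_one (fun e he => (hlev e he).2) x⟩, lf_usc, ?_, ?_⟩
  · refine ⟨e₁.1, le_antisymm (lf_le_one (fun e he => (hlev e he).2) _) ?_⟩
    have := lf_ge he₁ e₁.1 (subset_closure rfl)
    rw [he₁2] at this
    exact this
  · rw [lf_supp_closed (fun e he => (hlev e he).1)]
    exact Set.Finite.isCompact_biUnion M.finite_toSet
      fun e _ => isCompact_singleton.closure

lemma lf_mem_closure_of_pos {M : List (X × ℝ)} {x : X} (h : 0 < lf M x) :
    ∃ e ∈ M, x ∈ closure {e.1} ∧ lf M x ≤ e.2 := lf_exists h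

end more

section reverse
variable {X : Type*} [UniformSpace X] {f : X → X}

lemma reverse_dir (hf : Continuous f)
    (H : ∀ u v : X → ℝ, IsFuzzySet u → IsFuzzySet v → ∀ U ∈ 𝓤 X, ∀ V ∈ 𝓤 X,
      ∃ n : ℕ, 0 < n ∧ ∃ w : X → ℝ, IsFuzzySet w ∧ FRel U u w ∧
        FRel V v ((zadeh f)^[n] w)) :
    ∀ A B : Set (X × X), IsOpen A → A.Nonempty → IsOpen B → B.Nonempty →
      ∃ n : ℕ, 0 < n ∧ ((Prod.map f f)^[n] '' A ∩ B).Nonempty := by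
  have P3 : ∀ S T₁ T₂ : Set X, IsOpen S → S.Nonempty → IsOpen T₁ → T₁.Nonempty →
      IsOpen T₂ → T₂.Nonempty → ∃ n, 0 < n ∧
      (f^[n] '' S ∩ T₁).Nonempty ∧ (f^[n] '' S ∩ T₂).Nonempty := by
    intro S T₁ T₂ hS hSne hT₁ hT₁ne hT₂ hT₂ne
    obtain ⟨a, ha⟩ := hSne
    obtain ⟨Us, hUs, hUsS⟩ := UniformSpace.mem_nhds_iff.mp (hS.mem_nhds ha)
    obtain ⟨b₁, hb₁⟩ := hT₁ne
    obtain ⟨W₁, hW₁, hW₁T⟩ := UniformSpace.mem_nhds_iff.mp (hT₁.mem_nhds hb₁)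
    obtain ⟨b₂, hb₂⟩ := hT₂ne
    obtain ⟨W₂, hW₂, hW₂T⟩ := UniformSpace.mem_nhds_iff.mp (hT₂.mem_nhds hb₂)
    obtain ⟨U₁, hU₁, hU₁o, hU₁s, hU1, hU2, hU3, hU4⟩ := comp4_exists hUs
    obtain ⟨V₁, hV₁, hV₁o, hV₁s, hV1, hV2, hV3, hV4⟩ := comp4_exists (inter_mem hW₁ hW₂)
    set u := lf [(a, (1:ℝ))] with hu_def
    set v := lf [(b₁, (1:ℝ)), (b₂, (1/2:ℝ))] with hv_def
    have hu : IsFuzzySet u := by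
      refine lf_isFuzzySet _ ?_ ⟨(a,1), List.mem_singleton.mpr rfl, rfl⟩
      intro e he
      rcases List.mem_singleton.mp he with rfl
      norm_num
    have hv : IsFuzzySet v := by
      refine lf_isFuzzySet _ ?_ ⟨(b₁,1), List.mem_cons_self, rfl⟩
      intro e he
      rcases List.mem_cons.mp he with rfl | he'
      · norm_num
      rcases List.mem_singleton.mp he' with rfl
      norm_num
    obtain ⟨n, hn, w, hw, hFuw, hFvw⟩ := H u v hu hv U₁ hU₁ V₁ hV₁
    have hw0 : ∀ x, 0 ≤ w x := fun x => (hw.mem_Icc x).1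
    have hw1 : ∀ x, w x ≤ 1 := fun x => (hw.mem_Icc x).2
    have extract : ∀ (α : ℝ), 0 < α → α ≤ 1 → ∀ b : X, α ≤ v b →
        ∃ q, (b, q) ∈ V₁ ∧ ∃ x ∈ S, f^[n] x = q := by
      intro α hα0 hα1 b hb
      have hKr := hFvw α ⟨hα0.le, hα1⟩
      have hbcut : b ∈ fuzzyCut v α := by rw [fuzzyCut_pos v (ne_of_gt hα0)]; exact hb
      obtain ⟨q, hq, hqb⟩ := hKr.1 hbcut
      refine ⟨q, hV₁s.mk_mem_comm.mp hqb, ?_⟩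
      rw [fuzzyCut_pos _ (ne_of_gt hα0)] at hq
      obtain ⟨x, hxq, hxw⟩ := zadeh_iter_exists_gt hw0 hw1
        (by linarith : (0:ℝ) ≤ α/2) (by linarith : α/2 < α) hq
      refine ⟨x, ?_, hxq⟩
      have hwx0 : 0 < w x := by linarith
      have hKu := hFuw (w x) ⟨hwx0.le, hw1 x⟩
      have hxcut : x ∈ fuzzyCut w (w x) := by
        rw [fuzzyCut_pos _ (ne_of_gt hwx0)]; exact mem_setOf_eq ▸ le_refl _
      obtain ⟨p, hp, hpx⟩ := hKu.2 hxcut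
      rw [fuzzyCut_pos _ (ne_of_gt hwx0)] at hp
      have hup : 0 < u p := lt_of_lt_of_le hwx0 hp
      obtain ⟨e, he, hpe, _⟩ := lf_exists hup
      rcases List.mem_singleton.mp he with rfl
      obtain ⟨s, hs, hsp⟩ := exists_mem_of_mem_closure hU₁ hU₁s hpe
      have hsa : s = a := mem_singleton_iff.mp hs
      rw [hsa] at hsp
      exact hUsS (hU2 a p x hsp hpx)
    have hvb₁ : (1:ℝ) ≤ v b₁ :=
      lf_ge (M := [(b₁,(1:ℝ)), (b₂,(1/2:ℝ))]) (e := (b₁,(1:ℝ)))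
        (List.mem_cons_self) b₁ (subset_closure rfl)
    have hvb₂ : (1/2:ℝ) ≤ v b₂ :=
      lf_ge (M := [(b₁,(1:ℝ)), (b₂,(1/2:ℝ))]) (e := (b₂,(1/2:ℝ)))
        (List.mem_cons_of_mem _ (List.mem_singleton.mpr rfl)) b₂ (subset_closure rfl)
    refine ⟨n, hn, ?_, ?_⟩
    · obtain ⟨q, hbq, x, hxS, hxq⟩ := extract 1 one_pos (le_refl 1) b₁ hvb₁
      exact ⟨q, ⟨x, hxS, hxq⟩, hW₁T (hV1 b₁ q hbq).1⟩
    · obtain ⟨q, hbq, x, hxS, hxq⟩ := extract (1/2) (by norm_num) (by norm_num) b₂ hvb₂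
      exact ⟨q, ⟨x, hxS, hxq⟩, hW₂T (hV1 b₂ q hbq).2⟩
  intro A B hA hAne hB hBne
  obtain ⟨⟨a₁, a₂⟩, hAmem⟩ := hAne
  obtain ⟨A₁, A₂, hA₁, hA₂, ha₁, ha₂, hprodA⟩ := isOpen_prod_iff.mp hA a₁ a₂ hAmem
  obtain ⟨⟨b₁, b₂⟩, hBmem⟩ := hBne
  obtain ⟨B₁, B₂, hB₁, hB₂, hb₁, hb₂, hprodB⟩ := isOpen_prod_iff.mp hB b₁ b₂ hBmem
  obtain ⟨n₀, hn₀, ⟨c, ⟨x₁, hx₁, hx₁c⟩, hc⟩, ⟨d, ⟨x₂, hx₂, hx₂d⟩, hd⟩⟩ :=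
    P3 A₁ A₂ B₂ hA₁ ⟨a₁, ha₁⟩ hA₂ ⟨a₂, ha₂⟩ hB₂ ⟨b₂, hb₂⟩
  set E := A₁ ∩ f^[n₀] ⁻¹' A₂ with hE
  set D₀ := f^[n₀] ⁻¹' B₂ with hD₀
  have hEo : IsOpen E := hA₁.inter (hA₂.preimage (hf.iterate n₀))
  have hEne : E.Nonempty := ⟨x₁, hx₁, by simp only [mem_preimage, hx₁c]; exact hc⟩
  have hD₀o : IsOpen D₀ := hB₂.preimage (hf.iterate n₀)
  have hD₀ne : D₀.Nonempty := ⟨x₂, by simp only [hD₀, mem_preimage, hx₂d]; exact hd⟩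
  obtain ⟨n, hn, ⟨y, ⟨x, hxE, hxy⟩, hyB⟩, ⟨y', ⟨x', hx'E, hx'y⟩, hy'D⟩⟩ :=
    P3 E B₁ D₀ hEo hEne hB₁ ⟨b₁, hb₁⟩ hD₀o hD₀ne
  refine ⟨n, hn, ⟨(y, f^[n₀] y'), ⟨(x, f^[n₀] x'), ?_, ?_⟩, ?_⟩⟩
  · exact hprodA (mk_mem_prod hxE.1 hx'E.2)
  · rw [prodMap_iterate]
    simp only [Prod.mk.injEq]
    exact ⟨hxy, by rw [← Function.iterate_add_apply, add_comm,
      Function.iterate_add_apply, hx'y]⟩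
  · exact hprodB (mk_mem_prod hyB hy'D)
end reverse

section forward
variable {X : Type*} [UniformSpace X] {f : X → X}

lemma init_le_foldr_max {c : ℝ} : ∀ l : List ℝ, c ≤ l.foldr max c := by
  intro l
  induction l with
  | nil => exact le_refl _
  | cons a t ih => exact le_trans ih (le_max_right _ _)

lemma mem_le_foldr_max {c : ℝ} {l : List ℝ} {a : ℝ} (h : a ∈ l) : a ≤ l.foldr max c := by
  induction l with
  | nil => simp at h
  | cons b t ih =>
    rcases List.mem_cons.mp h with rfl | h'
    · exact le_max_left _ _
    · exact le_trans (ih h') (le_max_right _ _)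

lemma foldr_max_lt {c α : ℝ} {l : List ℝ} (hc : c < α) (h : ∀ a ∈ l, a < α) :
    l.foldr max c < α := by
  induction l with
  | nil => exact hc
  | cons b t ih =>
    exact max_lt (h b (List.mem_cons_self))
      (ih fun a ha => h a (List.mem_cons_of_mem _ ha))

lemma forward_dir (hf : Continuous f)
    (H : ∀ A B : Set (X × X), IsOpen A → A.Nonempty → IsOpen B → B.Nonempty →
      ∃ n : ℕ, 0 < n ∧ ((Prod.map f f)^[n] '' A ∩ B).Nonempty) :
    ∀ u v : X → ℝ, IsFuzzySet u → IsFuzzySet v → ∀ U ∈ 𝓤 X, ∀ V ∈ 𝓤 X,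
      ∃ n : ℕ, 0 < n ∧ ∃ w : X → ℝ, IsFuzzySet w ∧ FRel U u w ∧
        FRel V v ((zadeh f)^[n] w) := by
  intro u v hu hv U hU V hV
  have H2 : ∀ A B C D : Set X, IsOpen A → A.Nonempty → IsOpen B → B.Nonempty →
      IsOpen C → C.Nonempty → IsOpen D → D.Nonempty →
      ∃ k, 0 < k ∧ (f^[k] '' A ∩ C).Nonempty ∧ (f^[k] '' B ∩ D).Nonempty := by
    intro A B C D hA hAne hB hBne hC hCne hD hDne
    obtain ⟨k, hk, ⟨y, ⟨p, hp, hpy⟩, hyCD⟩⟩ := H (A ×ˢ B) (C ×ˢ D) (hA.prod hB)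
      (hAne.prod hBne) (hC.prod hD) (hCne.prod hDne)
    rw [prodMap_iterate] at hpy
    exact ⟨k, hk, ⟨y.1, ⟨p.1, hp.1, by rw [← hpy]⟩, hyCD.1⟩,
            ⟨y.2, ⟨p.2, hp.2, by rw [← hpy]⟩, hyCD.2⟩⟩
  obtain ⟨U₁, hU₁, hU₁o, hU₁s, hU1, hU2, hU3, hU4⟩ := comp4_exists hU
  obtain ⟨V₁, hV₁, hV₁o, hV₁s, hV1, hV2, hV3, hV4⟩ := comp4_exists hV
  have hu0 : ∀ x, 0 ≤ u x := fun x => (hu.mem_Icc x).1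
  have hu1 : ∀ x, u x ≤ 1 := fun x => (hu.mem_Icc x).2
  have hv0 : ∀ x, 0 ≤ v x := fun x => (hv.mem_Icc x).1
  have hv1 : ∀ x, v x ≤ 1 := fun x => (hv.mem_Icc x).2
  obtain ⟨xu, hxu⟩ := hu.normal
  obtain ⟨xv, hxv⟩ := hv.normal
  obtain ⟨Lu, hLuP, ⟨eu, heu, heu2⟩, hLuC⟩ :=
    net_lemma hu0 hu1 hu.usc hu.compact_supp hu.normal hU₁ hU₁o hU₁s
  obtain ⟨Lv, hLvP, -, hLvC⟩ :=
    net_lemma hv0 hv1 hv.usc hv.compact_supp hv.normal hV₁ hV₁o hV₁s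
  set pairs : List (Set X × Set X) :=
    Lu.map (fun e => (ball e.1 U₁, ball xv V₁)) ++
    Lv.map (fun e => (ball xu U₁, ball e.1 V₁)) with hpairs
  obtain ⟨n, hn, hall⟩ := multi_trans hf H2 pairs (by
    intro pr hpr
    rcases List.mem_append.mp hpr with h | h
    · obtain ⟨e, -, rfl⟩ := List.mem_map.mp h
      exact ⟨UniformSpace.isOpen_ball _ hU₁o, ⟨e.1, refl_mem_uniformity hU₁⟩,
        UniformSpace.isOpen_ball _ hV₁o, ⟨xv, refl_mem_uniformity hV₁⟩⟩
    · obtain ⟨e, -, rfl⟩ := List.mem_map.mp h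
      exact ⟨UniformSpace.isOpen_ball _ hU₁o, ⟨xu, refl_mem_uniformity hU₁⟩,
        UniformSpace.isOpen_ball _ hV₁o, ⟨e.1, refl_mem_uniformity hV₁⟩⟩)
  have hselu : ∀ e : {e // e ∈ Lu}, ∃ z, (e.1.1, z) ∈ U₁ ∧ (xv, f^[n] z) ∈ V₁ := by
    intro e
    have hmem : ((ball e.1.1 U₁ : Set X), (ball xv V₁ : Set X)) ∈ pairs :=
      List.mem_append.mpr (Or.inl (List.mem_map.mpr ⟨e.1, e.2, rfl⟩))
    obtain ⟨y, ⟨z, hz, hzy⟩, hy⟩ := hall _ hmem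
    exact ⟨z, hz, by rwa [hzy]⟩
  have hselv : ∀ e : {e // e ∈ Lv}, ∃ z, (xu, z) ∈ U₁ ∧ (e.1.1, f^[n] z) ∈ V₁ := by
    intro e
    have hmem : ((ball xu U₁ : Set X), (ball e.1.1 V₁ : Set X)) ∈ pairs :=
      List.mem_append.mpr (Or.inr (List.mem_map.mpr ⟨e.1, e.2, rfl⟩))
    obtain ⟨y, ⟨z, hz, hzy⟩, hy⟩ := hall _ hmem
    exact ⟨z, hz, by rwa [hzy]⟩
  choose zu hzu1 hzu2 using hselu
  choose zv hzv1 hzv2 using hselv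
  set M : List (X × ℝ) :=
    Lu.attach.map (fun e => (zu e, e.1.2)) ++ Lv.attach.map (fun e => (zv e, e.1.2)) with hM
  set w := lf M with hw_def
  have hMmem : ∀ e ∈ M, (∃ a : {e // e ∈ Lu}, e = (zu a, a.1.2)) ∨
      (∃ b : {e // e ∈ Lv}, e = (zv b, b.1.2)) := by
    intro e he
    rcases List.mem_append.mp he with h | h
    · obtain ⟨a, -, rfl⟩ := List.mem_map.mp h; exact Or.inl ⟨a, rfl⟩
    · obtain ⟨b, -, rfl⟩ := List.mem_map.mp h; exact Or.inr ⟨b, rfl⟩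
  have hMu : ∀ a : {e // e ∈ Lu}, ((zu a, a.1.2) : X × ℝ) ∈ M := fun a =>
    List.mem_append.mpr (Or.inl (List.mem_map.mpr ⟨a, List.mem_attach _ _, rfl⟩))
  have hMv : ∀ b : {e // e ∈ Lv}, ((zv b, b.1.2) : X × ℝ) ∈ M := fun b =>
    List.mem_append.mpr (Or.inr (List.mem_map.mpr ⟨b, List.mem_attach _ _, rfl⟩))
  have hMlev : ∀ e ∈ M, 0 < e.2 ∧ e.2 ≤ 1 := by
    intro e he
    rcases hMmem e he with ⟨a, rfl⟩ | ⟨b, rfl⟩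
    · exact ⟨(hLuP a.1 a.2).1, (hLuP a.1 a.2).2.1⟩
    · exact ⟨(hLvP b.1 b.2).1, (hLvP b.1 b.2).2.1⟩
  have hwFuzzy : IsFuzzySet w := lf_isFuzzySet M hMlev ⟨(zu ⟨eu, heu⟩, eu.2), hMu _, heu2⟩
  have hw0 : ∀ x, 0 ≤ w x := lf_nonneg
  have hw1 : ∀ x, w x ≤ 1 := lf_le_one (fun e he => (hMlev e he).2)
  set gn := (zadeh f)^[n] w with hgn_def
  have hwzu : ∀ a : {e // e ∈ Lu}, a.1.2 ≤ w (zu a) :=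
    fun a => lf_ge (hMu a) _ (subset_closure rfl)
  have hwzv : ∀ b : {e // e ∈ Lv}, b.1.2 ≤ w (zv b) :=
    fun b => lf_ge (hMv b) _ (subset_closure rfl)
  have hgnzu : ∀ a : {e // e ∈ Lu}, a.1.2 ≤ gn (f^[n] (zu a)) :=
    fun a => le_trans (hwzu a) (zadeh_iter_ge hw0 hw1 n (zu a))
  have hgnzv : ∀ b : {e // e ∈ Lv}, b.1.2 ≤ gn (f^[n] (zv b)) :=
    fun b => le_trans (hwzv b) (zadeh_iter_ge hw0 hw1 n (zv b))
  have hclosure_pair : ∀ (z x : X) (W : Set (X × X)), W ∈ 𝓤 X → SetRel.IsSymm W →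
      x ∈ closure ({z} : Set X) → (z, x) ∈ W := by
    intro z x W hW hWs hx
    obtain ⟨s, hs, hsx⟩ := exists_mem_of_mem_closure hW hWs hx
    rwa [mem_singleton_iff.mp hs] at hsx
  have himgcl : ∀ (z x : X), x ∈ closure ({z} : Set X) →
      f^[n] x ∈ closure ({f^[n] z} : Set X) := by
    intro z x hx
    have h1 := image_closure_subset_closure_image (s := ({z} : Set X)) (hf.iterate n)
    have h2 : f^[n] x ∈ closure (f^[n] '' {z}) := h1 (mem_image_of_mem _ hx)
    rwa [image_singleton] at h2
  refine ⟨n, hn, w, hwFuzzy, ?_, ?_⟩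
  · -- FRel U u w
    intro α hα
    rcases eq_or_lt_of_le hα.1 with heq | hα0
    · rw [← heq, fuzzyCut_zero, fuzzyCut_zero]
      constructor
      · intro y hy
        obtain ⟨x, hx, hxy⟩ := exists_mem_of_mem_closure hU₁ hU₁s hy
        obtain ⟨p, ⟨ℓ, hpl, hup⟩, m, hpm, hmx⟩ :=
          hLuC (u x) hx (hu1 x) (show u x ≤ u x from le_refl _)
        set a : {e // e ∈ Lu} := ⟨(p, ℓ), hpl⟩ with ha
        refine ⟨zu a, subset_closure ?_, hU4 _ _ _ _ _ (hU₁s.mk_mem_comm.mp (hzu1 a)) hpm hmx hxy⟩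
        exact lt_of_lt_of_le (hLuP (p, ℓ) hpl).1 (hwzu a)
      · intro y hy
        obtain ⟨x, hx, hxy⟩ := exists_mem_of_mem_closure hU₁ hU₁s hy
        obtain ⟨e, he, hxe, hle⟩ := lf_exists hx
        rcases hMmem e he with ⟨a, rfl⟩ | ⟨b, rfl⟩
        · have hzx : (zu a, x) ∈ U₁ := hclosure_pair _ _ _ hU₁ hU₁s hxe
          have hpu : (0:ℝ) < u a.1.1 := lt_of_lt_of_le (hLuP a.1 a.2).1 (hLuP a.1 a.2).2.2
          exact ⟨a.1.1, subset_closure hpu, hU3 _ _ _ _ (hzu1 a) hzx hxy⟩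
        · have hzx : (zv b, x) ∈ U₁ := hclosure_pair _ _ _ hU₁ hU₁s hxe
          have hpu : (0:ℝ) < u xu := by rw [hxu]; norm_num
          exact ⟨xu, subset_closure hpu, hU3 _ _ _ _ (hzv1 b) hzx hxy⟩
    · rw [fuzzyCut_pos u (ne_of_gt hα0), fuzzyCut_pos w (ne_of_gt hα0)]
      constructor
      · intro x hx
        obtain ⟨p, ⟨ℓ, hpl, hαℓ⟩, m, hpm, hmx⟩ := hLuC α hα0 hα.2 hx
        set a : {e // e ∈ Lu} := ⟨(p, ℓ), hpl⟩ with ha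
        refine ⟨zu a, le_trans hαℓ (hwzu a), hU3 _ _ _ _ (hU₁s.mk_mem_comm.mp (hzu1 a)) hpm hmx⟩
      · intro x hx
        have hwx : 0 < w x := lt_of_lt_of_le hα0 hx
        obtain ⟨e, he, hxe, hle⟩ := lf_exists hwx
        have hαe : α ≤ e.2 := le_trans hx hle
        rcases hMmem e he with ⟨a, rfl⟩ | ⟨b, rfl⟩
        · have hzx : (zu a, x) ∈ U₁ := hclosure_pair _ _ _ hU₁ hU₁s hxe
          exact ⟨a.1.1, le_trans hαe (hLuP a.1 a.2).2.2, hU2 _ _ _ (hzu1 a) hzx⟩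
        · have hzx : (zv b, x) ∈ U₁ := hclosure_pair _ _ _ hU₁ hU₁s hxe
          exact ⟨xu, by rw [mem_setOf_eq, hxu]; exact hα.2, hU2 _ _ _ (hzv1 b) hzx⟩
  · -- FRel V v gn
    intro α hα
    rcases eq_or_lt_of_le hα.1 with heq | hα0
    · rw [← heq, fuzzyCut_zero, fuzzyCut_zero]
      constructor
      · intro y hy
        obtain ⟨x, hx, hxy⟩ := exists_mem_of_mem_closure hV₁ hV₁s hy
        obtain ⟨q, ⟨m', hqm', hvq⟩, m, hqm, hmx⟩ :=
          hLvC (v x) hx (hv1 x) (show v x ≤ v x from le_refl _)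
        set b : {e // e ∈ Lv} := ⟨(q, m'), hqm'⟩ with hb
        refine ⟨f^[n] (zv b), subset_closure ?_,
          hV4 _ _ _ _ _ (hV₁s.mk_mem_comm.mp (hzv2 b)) hqm hmx hxy⟩
        exact lt_of_lt_of_le (hLvP (q, m') hqm').1 (hgnzv b)
      · intro y hy
        obtain ⟨q, hq, hqy⟩ := exists_mem_of_mem_closure hV₁ hV₁s hy
        obtain ⟨x, hxq, hwx⟩ := zadeh_iter_exists_gt hw0 hw1
          (le_of_lt (half_pos hq)) (half_lt_self hq) (le_refl (gn q))
        obtain ⟨e, he, hxe, hle⟩ := lf_exists (lt_trans (half_pos hq) hwx)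
        have hfq : (f^[n] e.1, q) ∈ V₁ := by
          have := himgcl e.1 x hxe
          rw [hxq] at this
          exact hclosure_pair _ _ _ hV₁ hV₁s this
        rcases hMmem e he with ⟨a, rfl⟩ | ⟨b, rfl⟩
        · have hvxv : (0:ℝ) < v xv := by rw [hxv]; norm_num
          exact ⟨xv, subset_closure hvxv, hV3 _ _ _ _ (hzu2 a) hfq hqy⟩
        · have hvb : (0:ℝ) < v b.1.1 := lt_of_lt_of_le (hLvP b.1 b.2).1 (hLvP b.1 b.2).2.2
          exact ⟨b.1.1, subset_closure hvb, hV3 _ _ _ _ (hzv2 b) hfq hqy⟩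
    · rw [fuzzyCut_pos v (ne_of_gt hα0), fuzzyCut_pos gn (ne_of_gt hα0)]
      constructor
      · intro x hx
        obtain ⟨q, ⟨m', hqm', hαm'⟩, m, hqm, hmx⟩ := hLvC α hα0 hα.2 hx
        set b : {e // e ∈ Lv} := ⟨(q, m'), hqm'⟩ with hb
        exact ⟨f^[n] (zv b), le_trans hαm' (hgnzv b),
          hV3 _ _ _ _ (hV₁s.mk_mem_comm.mp (hzv2 b)) hqm hmx⟩
      · intro q hq
        set Tl := (M.map Prod.snd).filter (fun ℓ => decide (ℓ < α)) with hTl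
        set β := Tl.foldr max (α/2) with hβ
        have hβ0 : 0 < β := lt_of_lt_of_le (half_pos hα0) (init_le_foldr_max Tl)
        have hβα : β < α := by
          apply foldr_max_lt (by linarith)
          intro ℓ hℓ
          have := List.mem_filter.mp hℓ
          exact of_decide_eq_true this.2
        obtain ⟨x, hxq, hwx⟩ := zadeh_iter_exists_gt hw0 hw1 hβ0.le hβα hq
        obtain ⟨e, he, hxe, hle⟩ := lf_exists (lt_trans hβ0 hwx)
        have hαe : α ≤ e.2 := by
          by_contra hlt
          push_neg at hlt
          have hmem : e.2 ∈ Tl := List.mem_filter.mpr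
            ⟨List.mem_map.mpr ⟨e, he, rfl⟩, decide_eq_true hlt⟩
          have : e.2 ≤ β := mem_le_foldr_max hmem
          linarith
        have hfq : (f^[n] e.1, q) ∈ V₁ := by
          have := himgcl e.1 x hxe
          rw [hxq] at this
          exact hclosure_pair _ _ _ hV₁ hV₁s this
        rcases hMmem e he with ⟨a, rfl⟩ | ⟨b, rfl⟩
        · exact ⟨xv, by rw [mem_setOf_eq, hxv]; exact hα.2, hV2 _ _ _ (hzu2 a) hfq⟩
        · exact ⟨b.1.1, le_trans hαe (hLvP b.1 b.2).2.2, hV2 _ _ _ (hzv2 b) hfq⟩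
end forward

/-- `f` is weakly mixing (`f × f` is transitive on `X × X`) if and only if the Zadeh
extension is topologically transitive on `(ℱ(X), 𝒰_∞)` (stated via basic level-wise
balls). -/
theorem stmt17 {X : Type*} [UniformSpace X] {f : X → X} (hf : Continuous f) :
    (∀ A B : Set (X × X), IsOpen A → A.Nonempty → IsOpen B → B.Nonempty →
      ∃ n : ℕ, 0 < n ∧ ((Prod.map f f)^[n] '' A ∩ B).Nonempty) ↔
    (∀ u v : X → ℝ, IsFuzzySet u → IsFuzzySet v → ∀ U ∈ 𝓤 X, ∀ V ∈ 𝓤 X,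
      ∃ n : ℕ, 0 < n ∧ ∃ w : X → ℝ, IsFuzzySet w ∧ FRel U u w ∧
        FRel V v ((zadeh f)^[n] w)) := by
  exact ⟨fun H => forward_dir hf H, fun H => reverse_dir hf H⟩
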